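/- Let F(x)=x^α for 0<x≤1 and F(x)=1 for x≥1 (power law on [0,1]), α>0. Then the Williamson transform equals G_F(x)=x^α/2 for 0<x≤1 and G_F(x)=1-1/(2x^α) for x≥1, m(α)=E[X^α]=1/2, and the Kendall renewal function satisfies x^{-α}R(x)=4 exactly for all x≥1. -/

import Mathlib

open MeasureTheory Filter Topology Real Set

lemma key15 (α x c : ℝ) (hα : 0 < α) (hx : 0 < x) (hc : 0 ≤ c) :
    (∫ t in (0:ℝ)..c, (1 - (t / x) ^ α) * (α * t ^ (α - 1)))
      = c ^ α - c ^ (2*α) / (2 * x ^ α) := by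
  have hx0 : x ^ α ≠ 0 := (Real.rpow_pos_of_pos hx α).ne'
  have hcongr : ∀ t ∈ Set.uIoc (0:ℝ) c,
      (1 - (t / x) ^ α) * (α * t ^ (α - 1))
        = α * t ^ (α - 1) - (α / x ^ α) * t ^ (2*α - 1) := by
    intro t ht
    rw [Set.uIoc_of_le hc] at ht
    have ht0 : 0 < t := ht.1
    rw [Real.div_rpow ht0.le hx.le]
    have h2 : t ^ (2*α - 1) = t ^ α * t ^ (α - 1) := by
      rw [← Real.rpow_add ht0]; congr 1; ring
    rw [h2]; field_simp
  rw [intervalIntegral.integral_congr_ae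
    (Filter.Eventually.of_forall fun t => hcongr t)]
  have h1 : IntervalIntegrable (fun t : ℝ => t ^ (α - 1)) volume 0 c :=
    intervalIntegral.intervalIntegrable_rpow' (by linarith)
  have h2 : IntervalIntegrable (fun t : ℝ => t ^ (2*α - 1)) volume 0 c :=
    intervalIntegral.intervalIntegrable_rpow' (by linarith)
  rw [intervalIntegral.integral_sub (h1.const_mul α) (h2.const_mul _),
    intervalIntegral.integral_const_mul, intervalIntegral.integral_const_mul,
    integral_rpow (Or.inl (by linarith)), integral_rpow (Or.inl (by linarith))]
  rw [Real.zero_rpow (by linarith), Real.zero_rpow (by linarith)]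
  have : α - 1 + 1 = α := by ring
  rw [this]
  have : 2*α - 1 + 1 = 2*α := by ring
  rw [this]
  field_simp
  ring

theorem stmt15 (α : ℝ) (hα : 0 < α) (F G R : ℝ → ℝ)
    (hF0 : ∀ x ≤ (0:ℝ), F x = 0)
    (hF1 : ∀ x : ℝ, 0 < x → x ≤ 1 → F x = x ^ α)
    (hF2 : ∀ x ≥ (1:ℝ), F x = 1)
    (hG : ∀ x > 0, G x = ∫ t in (0:ℝ)..(min x 1), (1 - (t / x) ^ α) * (α * t ^ (α - 1)))
    (hR : ∀ x > 0, R x = 2 / (1 - G x) - (1 - F x) / (1 - G x) ^ 2) :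
    (∀ x : ℝ, 0 < x → x ≤ 1 → G x = x ^ α / 2) ∧
    (∀ x ≥ (1:ℝ), G x = 1 - 1 / (2 * x ^ α)) ∧
    (∫ t in (0:ℝ)..1, t ^ α * (α * t ^ (α - 1))) = 1 / 2 ∧
    (∀ x ≥ (1:ℝ), x ^ (-α) * R x = 4) := by
  have hG1 : ∀ x : ℝ, 0 < x → x ≤ 1 → G x = x ^ α / 2 := by
    intro x hx hx1
    rw [hG x hx, min_eq_left hx1, key15 α x x hα hx hx.le]
    have h2 : x ^ (2*α) = x ^ α * x ^ α := by
      rw [two_mul, Real.rpow_add hx]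
    have hx0 : x ^ α ≠ 0 := (Real.rpow_pos_of_pos hx α).ne'
    rw [h2]; field_simp; ring
  have hG2 : ∀ x ≥ (1:ℝ), G x = 1 - 1 / (2 * x ^ α) := by
    intro x hx
    have hx0 : (0:ℝ) < x := lt_of_lt_of_le one_pos hx
    rw [hG x hx0, min_eq_right hx, key15 α x 1 hα hx0 zero_le_one,
      Real.one_rpow, Real.one_rpow]
  refine ⟨hG1, hG2, ?_, ?_⟩
  · have hcongr : ∀ t ∈ Set.uIoc (0:ℝ) 1,
        t ^ α * (α * t ^ (α - 1)) = α * t ^ (2*α - 1) := by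
      intro t ht
      rw [Set.uIoc_of_le zero_le_one] at ht
      have h2 : t ^ (2*α - 1) = t ^ α * t ^ (α - 1) := by
        rw [← Real.rpow_add ht.1]; congr 1; ring
      rw [h2]; ring
    rw [intervalIntegral.integral_congr_ae
      (Filter.Eventually.of_forall fun t => hcongr t),
      intervalIntegral.integral_const_mul, integral_rpow (Or.inl (by linarith))]
    rw [Real.zero_rpow (by linarith)]
    have : 2*α - 1 + 1 = 2*α := by ring
    rw [this, Real.one_rpow]
    field_simp
    ring
  · intro x hx
    have hx0 : (0:ℝ) < x := lt_of_lt_of_le one_pos hx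
    have hxα : (0:ℝ) < x ^ α := Real.rpow_pos_of_pos hx0 α
    rw [hR x hx0, hF2 x hx, hG2 x hx]
    have h1 : 1 - (1 - 1 / (2 * x ^ α)) = 1 / (2 * x ^ α) := by ring
    rw [h1, Real.rpow_neg hx0.le]
    field_simp
    ring
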